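/- Assume q_0 > 0 and z_j > 0 for all j (no equilibrium). Fix φ_s ∈ ℝ. For each L > 0, let φ_L be the unique twice continuously differentiable solution of φ″ + f(φ) = 0 on [−L/2, L/2] with φ_L(−L/2) = φ_L(L/2) = φ_s; since f > 0 everywhere, φ_L′ is strictly decreasing with φ_L′(−L/2) = −φ_L′(L/2) > 0, so there is a unique δ_D(L) ∈ (0, L) with φ_L′(−L/2 + δ_D(L)) = φ_L′(−L/2)/2. Then 1/4 ≤ liminf_{L→∞} δ_D(L)/L ≤ limsup_{L→∞} δ_D(L)/L ≤ 1; in particular δ_D(L) and L have the same length scale and there is no Gouy–Chapman layer in the absence of equilibrium. -/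

import Mathlib

open Real Filter Set Topology

set_option maxHeartbeats 1000000

/-- A (C²) solution of the PB equation `φ'' + f(φ) = 0` on `[a, b]`, written as the
first-order planar system `φ' = u`, `u' = -f(φ)`. -/
def IsPBSol (f : ℝ → ℝ) (a b : ℝ) (φ u : ℝ → ℝ) : Prop :=
  ∀ x ∈ Set.Icc a b,
    HasDerivWithinAt φ (u x) (Set.Icc a b) x ∧
    HasDerivWithinAt u (-(f (φ x))) (Set.Icc a b) x

/-- No Gouy–Chapman layer in the absence of equilibrium: if `q0 > 0` and
all `z j > 0`, and `δ_D(L)` is the boundary-layer width of the equal-potential Dirichlet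
problem with value `φ_s` (determined by `φ_L'(-L/2 + δ_D(L)) = φ_L'(-L/2)/2`), then
`1/4 ≤ liminf_{L→∞} δ_D(L)/L ≤ limsup_{L→∞} δ_D(L)/L ≤ 1`, so `δ_D(L)` and `L` have the
same length scale. -/
theorem stmt17 {N : ℕ} (hN : 1 ≤ N) (z c : Fin N → ℝ)
    (hz : ∀ j, z j ≠ 0) (hc : ∀ j, 0 < c j) (q0 : ℝ)
    (f : ℝ → ℝ)
    (hf : ∀ φ : ℝ, f φ = q0 + ∑ j, z j * c j * Real.exp (-(z j) * φ))
    (hq0 : 0 < q0) (hzpos : ∀ j, 0 < z j)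
    (φs : ℝ)
    (φf uf : ℝ → ℝ → ℝ)
    (hsol : ∀ L : ℝ, 0 < L →
      IsPBSol f (-(L / 2)) (L / 2) (φf L) (uf L) ∧
      φf L (-(L / 2)) = φs ∧ φf L (L / 2) = φs)
    (δ : ℝ → ℝ)
    (hδ : ∀ L : ℝ, 0 < L →
      δ L ∈ Set.Ioo 0 L ∧ uf L (-(L / 2) + δ L) = uf L (-(L / 2)) / 2) :
    (1 / 4 : ℝ) ≤ Filter.liminf (fun L => δ L / L) atTop ∧
    Filter.limsup (fun L => δ L / L) atTop ≤ 1 := by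
  have hNe : Nonempty (Fin N) := Fin.pos_iff_nonempty.mp hN
  set G : ℝ := ∑ j, c j * Real.exp (-(z j) * φs) with hGdef
  have hG : 0 < G :=
    Finset.sum_pos (fun j _ => mul_pos (hc j) (Real.exp_pos _)) Finset.univ_nonempty
  have hfq0 : ∀ y, q0 ≤ f y := by
    intro y
    rw [hf]
    have h0 : (0:ℝ) ≤ ∑ j, z j * c j * Real.exp (-(z j) * y) :=
      Finset.sum_nonneg fun j _ =>
        le_of_lt (mul_pos (mul_pos (hzpos j) (hc j)) (Real.exp_pos _))
    linarith
  have hfc : Continuous f := by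
    have hfe : f = fun y => q0 + ∑ j, z j * c j * Real.exp (-(z j) * y) := funext hf
    rw [hfe]
    exact continuous_const.add (continuous_finset_sum _ fun j _ => by fun_prop)
  -- The quantitative per-`L` lower bound on `δ L / L`.
  have key : ∀ L : ℝ, 0 < L → 1/4 - (4*G/q0^2)/L^2 ≤ δ L / L := by
    intro L hL
    obtain ⟨hsolL, hφa, hφb⟩ := hsol L hL
    obtain ⟨⟨hd0, hdL⟩, hue⟩ := hδ L hL
    set a : ℝ := -(L / 2) with ha
    set b : ℝ := L / 2 with hb
    have hab : a < b := by rw [ha, hb]; linarith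
    set φ := φf L with hφdef
    set u := uf L with hudef
    set A := u a with hAdef
    set d := δ L with hddef
    set e := a + d with hedef
    have heb : e < b := by rw [hedef, ha, hb]; linarith
    have hae : a < e := by rw [hedef]; linarith
    -- derivative facts
    have hφd : ∀ x ∈ Set.Icc a b, HasDerivWithinAt φ (u x) (Set.Icc a b) x :=
      fun x hx => (hsolL x hx).1
    have hud : ∀ x ∈ Set.Icc a b, HasDerivWithinAt u (-(f (φ x))) (Set.Icc a b) x :=
      fun x hx => (hsolL x hx).2
    have hφd' : ∀ x ∈ Set.Ioo a b, HasDerivAt φ (u x) x := fun x hx =>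
      (hφd x (Ioo_subset_Icc_self hx)).hasDerivAt (Icc_mem_nhds hx.1 hx.2)
    have hud' : ∀ x ∈ Set.Ioo a b, HasDerivAt u (-(f (φ x))) x := fun x hx =>
      (hud x (Ioo_subset_Icc_self hx)).hasDerivAt (Icc_mem_nhds hx.1 hx.2)
    have hφc : ContinuousOn φ (Set.Icc a b) := fun x hx => (hφd x hx).continuousWithinAt
    have huc : ContinuousOn u (Set.Icc a b) := fun x hx => (hud x hx).continuousWithinAt
    -- `u` is antitone
    have huanti : AntitoneOn u (Set.Icc a b) := by
      apply antitoneOn_of_deriv_nonpos (convex_Icc a b) huc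
      · intro x hx
        rw [interior_Icc] at hx
        exact (hud' x hx).differentiableAt.differentiableWithinAt
      · intro x hx
        rw [interior_Icc] at hx
        rw [(hud' x hx).deriv]
        have := hfq0 (φ x); linarith
    -- linear upper bound `u x ≤ A - q0 (x - a)`
    have hulin : ∀ x ∈ Set.Icc a b, u x ≤ A - q0 * (x - a) := by
      have hmono : AntitoneOn (fun x => u x + q0 * x) (Set.Icc a b) := by
        apply antitoneOn_of_deriv_nonpos (convex_Icc a b)
          (huc.add (Continuous.continuousOn (by fun_prop)))
        · intro x hx
          rw [interior_Icc] at hx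
          exact ((hud' x hx).add ((hasDerivAt_id' (x := x)).const_mul q0)).differentiableAt.differentiableWithinAt
        · intro x hx
          rw [interior_Icc] at hx
          rw [((hud' x hx).add ((hasDerivAt_id' (x := x)).const_mul q0)).deriv]
          have := hfq0 (φ x); linarith
      intro x hx
      have h1 := hmono (left_mem_Icc.mpr hab.le) hx hx.1
      simp only at h1
      have h2 : q0 * (x - a) = q0 * x - q0 * a := by ring
      linarith
    -- FTC for φ : total integral of u vanishes
    have hintu : IntervalIntegrable u MeasureTheory.volume a b := by
      apply ContinuousOn.intervalIntegrable
      rw [uIcc_of_le hab.le]; exact huc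
    have hintlin : IntervalIntegrable (fun x => A - q0 * (x - a)) MeasureTheory.volume a b :=
      (Continuous.intervalIntegrable (by fun_prop) a b)
    have hftcφ : ∫ x in a..b, u x = 0 := by
      rw [intervalIntegral.integral_eq_sub_of_hasDeriv_right_of_le hab.le hφc
        (fun x hx => (hφd' x hx).hasDerivWithinAt) hintu, hφb, hφa, sub_self]
    -- lower bound on A
    have hcomp : ∫ x in a..b, (A - q0 * (x - a)) = A*L - q0*L^2/2 := by
      have hP : ∀ x ∈ Set.uIcc a b,
          HasDerivAt (fun y => A*y - q0*(y-a)^2/2) (A - q0 * (x - a)) x := by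
        intro x _
        have h1 : HasDerivAt (fun y : ℝ => (y - a)^2) (2*(x-a)) x := by
          simpa using ((hasDerivAt_id' (x := x)).sub_const a).fun_pow 2
        have h2 := ((hasDerivAt_id' (x := x)).const_mul A).fun_sub ((h1.const_mul q0).div_const 2)
        exact h2.congr_deriv (by ring)
      rw [intervalIntegral.integral_eq_sub_of_hasDerivAt hP hintlin]
      rw [ha, hb]; ring
    have hAL : q0 * L / 2 ≤ A := by
      have hle : (∫ x in a..b, u x) ≤ ∫ x in a..b, (A - q0 * (x - a)) :=
        intervalIntegral.integral_mono_on hab.le hintu hintlin hulin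
      rw [hftcφ, hcomp] at hle
      nlinarith [hle, hL]
    have hA0 : (0:ℝ) < A := lt_of_lt_of_le (by positivity) hAL
    -- `u ≥ A/2` on `[a, e]`
    have hu2 : ∀ x ∈ Set.Icc a e, A/2 ≤ u x := by
      intro x hx
      have hxb : x ∈ Set.Icc a b := Icc_subset_Icc_right heb.le hx
      have heeb : e ∈ Set.Icc a b := ⟨hae.le, heb.le⟩
      have := huanti hxb heeb hx.2
      rw [hue] at this
      exact this
    -- `φ` grows at least linearly on `[a, e]`
    have hIooae : Set.Ioo a e ⊆ Set.Ioo a b := Ioo_subset_Ioo_right heb.le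
    have hφlin : ∀ x ∈ Set.Icc a e, φs + A/2 * (x - a) ≤ φ x := by
      have hmon : MonotoneOn (fun x => φ x - A/2 * x) (Set.Icc a e) := by
        apply monotoneOn_of_deriv_nonneg (convex_Icc a e)
          (((hφc.mono (Icc_subset_Icc_right heb.le))).sub
            (Continuous.continuousOn (by fun_prop)))
        · intro x hx
          rw [interior_Icc] at hx
          exact ((hφd' x (hIooae hx)).sub
            ((hasDerivAt_id' (x := x)).const_mul (A/2))).differentiableAt.differentiableWithinAt
        · intro x hx
          rw [interior_Icc] at hx
          rw [((hφd' x (hIooae hx)).sub ((hasDerivAt_id' (x := x)).const_mul (A/2))).deriv]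
          have := hu2 x (Ioo_subset_Icc_self hx)
          simp only [mul_one]
          linarith
      intro x hx
      have h1 := hmon (left_mem_Icc.mpr hae.le) hx hx.1
      simp only at h1
      rw [hφa] at h1
      have h2 : A/2 * (x - a) = A/2*x - A/2*a := by ring
      linarith
    -- pointwise bound `f (φ x) ≤ R x`
    set R : ℝ → ℝ := fun x => q0 + ∑ j, z j * c j * Real.exp (-(z j) * (φs + A/2 * (x - a)))
      with hRdef
    have hRc : Continuous R := by
      apply continuous_const.add (continuous_finset_sum _ fun j _ => by fun_prop)
    have hfR : ∀ x ∈ Set.Icc a e, f (φ x) ≤ R x := by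
      intro x hx
      rw [hf, hRdef]
      apply add_le_add_right
      apply Finset.sum_le_sum
      intro j _
      have hzc : (0:ℝ) ≤ z j * c j := le_of_lt (mul_pos (hzpos j) (hc j))
      apply mul_le_mul_of_nonneg_left _ hzc
      apply Real.exp_le_exp.mpr
      have := hφlin x hx
      nlinarith [hzpos j]
    -- FTC for u on `[a,e]` : the integral of `f ∘ φ` is `A/2`
    have hint_fφ : IntervalIntegrable (fun x => f (φ x)) MeasureTheory.volume a e := by
      apply ContinuousOn.intervalIntegrable
      rw [uIcc_of_le hae.le]
      exact hfc.comp_continuousOn (hφc.mono (Icc_subset_Icc_right heb.le))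
    have hftcu : ∫ x in a..e, -(f (φ x)) = u e - u a := by
      apply intervalIntegral.integral_eq_sub_of_hasDeriv_right_of_le hae.le
        (huc.mono (Icc_subset_Icc_right heb.le))
        (fun x hx => (hud' x (hIooae hx)).hasDerivWithinAt) hint_fφ.neg
    have hIval : ∫ x in a..e, f (φ x) = A/2 := by
      rw [intervalIntegral.integral_neg] at hftcu
      rw [hue] at hftcu
      linarith
    have hea : e - a = d := by rw [hedef]; ring
    -- lower bound : `q0 d ≤ A/2`
    have h2 : q0 * d ≤ A / 2 := by
      have hmono := intervalIntegral.integral_mono_on hae.le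
        (intervalIntegrable_const (c := q0)) hint_fφ (fun x _ => hfq0 (φ x))
      rw [hIval, intervalIntegral.integral_const, smul_eq_mul, hea] at hmono
      linarith
    -- upper bound : `A/2 ≤ q0 d + 2 G / A`
    have h1 : A/2 ≤ q0 * d + 2/A * G := by
      have hle : (∫ x in a..e, f (φ x)) ≤ ∫ x in a..e, R x :=
        intervalIntegral.integral_mono_on hae.le hint_fφ (hRc.intervalIntegrable a e) hfR
      have hH : ∀ x ∈ Set.uIcc a e, HasDerivAt
          (fun y => q0*y + ∑ j, (-(2*c j/A)) * Real.exp (-(z j) * (φs + A/2 * (y - a))))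
          (R x) x := by
        intro x _
        have h0 : HasDerivAt (fun y : ℝ => q0*y) q0 x := by
          simpa using (hasDerivAt_id' (x := x)).const_mul q0
        have hsum : HasDerivAt
            (fun y => ∑ j, (-(2*c j/A)) * Real.exp (-(z j) * (φs + A/2 * (y - a))))
            (∑ j, z j * c j * Real.exp (-(z j) * (φs + A/2 * (x - a)))) x := by
          apply HasDerivAt.fun_sum
          intro j _
          have l1 : HasDerivAt (fun y : ℝ => -(z j) * (φs + A/2 * (y - a)))
              (-(z j) * (A/2)) x := by
            have l0 : HasDerivAt (fun y : ℝ => φs + A/2 * (y - a)) (A/2) x := by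
              simpa using (((hasDerivAt_id' (x := x)).sub_const a).const_mul (A/2)).const_add φs
            simpa using l0.const_mul (-(z j))
          have l2 := l1.exp
          have l3 := l2.const_mul (-(2*c j/A))
          exact l3.congr_deriv (by field_simp)
        simpa [hRdef] using h0.fun_add hsum
      have hRval : ∫ x in a..e, R x =
          (q0*e + ∑ j, (-(2*c j/A)) * Real.exp (-(z j) * (φs + A/2 * (e - a)))) -
          (q0*a + ∑ j, (-(2*c j/A)) * Real.exp (-(z j) * (φs + A/2 * (a - a)))) :=
        intervalIntegral.integral_eq_sub_of_hasDerivAt hH (hRc.intervalIntegrable a e)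
      have hS1 : ∑ j, (-(2*c j/A)) * Real.exp (-(z j) * (φs + A/2 * (e - a))) ≤ 0 := by
        apply Finset.sum_nonpos
        intro j _
        have hpos : (0:ℝ) < 2*c j/A := div_pos (by linarith [hc j]) hA0
        nlinarith [mul_pos hpos (Real.exp_pos (-(z j) * (φs + A/2 * (e - a))))]
      have hS2 : ∑ j, (-(2*c j/A)) * Real.exp (-(z j) * (φs + A/2 * (a - a))) = -(2/A*G) := by
        simp only [sub_self, mul_zero, add_zero]
        rw [hGdef, Finset.mul_sum, ← Finset.sum_neg_distrib]
        apply Finset.sum_congr rfl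
        intro j _
        ring
      rw [hIval, hRval, hS2] at hle
      have hqe : q0*e - q0*a = q0*d := by rw [hedef]; ring
      linarith
    -- final arithmetic
    have hA2 : A^2 ≤ 2*(q0*d)*A + 4*G := by
      have hmul := mul_le_mul_of_nonneg_right h1 hA0.le
      have hsimp : 2/A*G*A = 2*G := by field_simp
      nlinarith [hmul, hsimp]
    have hqL : (0:ℝ) < q0 * L := mul_pos hq0 hL
    have hkey : (q0*L/2)^2/2 - 2*G ≤ (q0*d)*(q0*L/2) := by
      have ht2 : (0:ℝ) ≤ (A - q0*L/2) * ((A + q0*L/2)/2 - q0*d) := by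
        apply mul_nonneg (by linarith) (by linarith)
      nlinarith [ht2, hA2]
    -- divide through by `q0^2 L^2`
    have hexp : (4*G/q0^2)/L^2 * (q0^2*L^2) = 4*G := by field_simp
    have hdL' : d/L * (q0^2*L^2) = q0^2*L*d := by field_simp
    have hsuff : (1/4 - (4*G/q0^2)/L^2) * (q0^2*L^2) ≤ d/L * (q0^2*L^2) := by
      nlinarith [hkey, hexp, hdL']
    exact le_of_mul_le_mul_right hsuff (by positivity)
  -- conclude with the filter statements
  have hup : ∀ᶠ L in atTop, δ L / L ≤ 1 := by
    filter_upwards [eventually_gt_atTop (0:ℝ)] with L hL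
    exact (div_le_one hL).mpr (hδ L hL).1.2.le
  constructor
  · have hg : Tendsto (fun L : ℝ => 1/4 - (4*G/q0^2)/L^2) atTop (𝓝 (1/4)) := by
      have h0 : Tendsto (fun L : ℝ => (4*G/q0^2)/L^2) atTop (𝓝 0) :=
        tendsto_const_nhds.div_atTop (tendsto_pow_atTop two_ne_zero)
      simpa using tendsto_const_nhds.sub h0
    calc (1/4 : ℝ) = liminf (fun L : ℝ => 1/4 - (4*G/q0^2)/L^2) atTop := hg.liminf_eq.symm
      _ ≤ liminf (fun L => δ L / L) atTop := by
          apply liminf_le_liminf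
          · filter_upwards [eventually_gt_atTop (0:ℝ)] with L hL using key L hL
          · exact hg.isBoundedUnder_ge
          · exact isCoboundedUnder_ge_of_eventually_le _ hup
  · refine limsup_le_of_le (isCoboundedUnder_le_of_eventually_le (x := (0:ℝ)) atTop ?_) hup
    filter_upwards [eventually_gt_atTop (0:ℝ)] with L hL
    exact div_nonneg (hδ L hL).1.1.le hL.le
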